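/- For the reverse Bessel coefficient matrix C, the matrix obtained after two steps of Neville elimination satisfies the self-similarity property c^{(3)}_{ij} = c_{i-2,j-2} for 3 ≤ j ≤ i ≤ n; i.e., the trailing principal submatrix C^{(3)}[3,…,n] equals the leading principal submatrix C[1,…,n-2]. -/

import Mathlib

/-- Entries of the lower triangular reverse Bessel coefficient matrix. -/
noncomputable def revC (i j : ℕ) : ℝ :=
  if j ≤ i then ((2 * i - j - 1).factorial : ℝ) / (2 ^ (i - j) * (j - 1).factorial * (i - j).factorial)
  else 0

/-- `revNE k i j` is the `(i,j)` entry of `C^{(k+1)}`, the matrix obtained after `k`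
steps of Neville elimination of the reverse Bessel coefficient matrix. -/
noncomputable def revNE : ℕ → ℕ → ℕ → ℝ
  | 0, i, j => revC i j
  | k + 1, i, j =>
      if k + 1 ≤ j ∧ j < i ∧ revNE k (i - 1) (k + 1) ≠ 0 then
        revNE k i j - revNE k i (k + 1) / revNE k (i - 1) (k + 1) * revNE k (i - 1) j
      else revNE k i j

lemma revC_eq (i j : ℕ) (h : j ≤ i) :
    revC i j = ((2 * i - j - 1).factorial : ℝ) / (2 ^ (i - j) * (j - 1).factorial * (i - j).factorial) :=
  if_pos h

lemma fact_ne (n : ℕ) : ((n.factorial : ℝ)) ≠ 0 :=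
  (Nat.cast_pos.mpr n.factorial_pos).ne'

lemma revC_pos (i j : ℕ) (h : j ≤ i) : 0 < revC i j := by
  rw [revC_eq i j h]
  have := Nat.factorial_pos (2 * i - j - 1)
  have := Nat.factorial_pos (j - 1)
  have := Nat.factorial_pos (i - j)
  positivity

lemma revC_diag (m : ℕ) : revC m m = 1 := by
  rw [revC_eq m m le_rfl, show 2 * m - m - 1 = m - 1 by omega, Nat.sub_self]
  simp [Nat.factorial_ne_zero]

/-- After one Neville step, column 2 vanishes below the diagonal. -/
lemma colB (b : ℕ) :
    revC (b + 3) 2 - revC (b + 3) 1 / revC (b + 2) 1 * revC (b + 2) 2 = 0 := by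
  rw [revC_eq (b+3) 2 (by omega), revC_eq (b+3) 1 (by omega),
      revC_eq (b+2) 1 (by omega), revC_eq (b+2) 2 (by omega)]
  rw [show 2*(b+3) - 2 - 1 = 2*b+3 by omega, show (b+3) - 2 = b+1 by omega,
      show 2*(b+3) - 1 - 1 = 2*b+4 by omega, show (b+3) - 1 = b+2 by omega,
      show 2*(b+2) - 1 - 1 = 2*b+2 by omega, show (b+2) - 1 = b+1 by omega,
      show 2*(b+2) - 2 - 1 = 2*b+1 by omega, show (b+2) - 2 = b by omega]
  have E1 : ((2*b+4).factorial : ℝ) = (2*b+4)*((2*b+3)*((2*b+2)*(2*b+1).factorial)) := by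
    rw [show 2*b+4 = (2*b+1)+1+1+1 by ring, Nat.factorial_succ, Nat.factorial_succ,
        Nat.factorial_succ]; push_cast; ring
  have E2 : ((2*b+3).factorial : ℝ) = (2*b+3)*((2*b+2)*(2*b+1).factorial) := by
    rw [show 2*b+3 = (2*b+1)+1+1 by ring, Nat.factorial_succ, Nat.factorial_succ]
    push_cast; ring
  have E3 : ((2*b+2).factorial : ℝ) = (2*b+2)*(2*b+1).factorial := by
    rw [show 2*b+2 = (2*b+1)+1 by ring, Nat.factorial_succ]; push_cast; ring
  have E4 : ((b+2).factorial : ℝ) = (b+2)*((b+1)*b.factorial) := by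
    rw [show b+2 = b+1+1 by ring, Nat.factorial_succ, Nat.factorial_succ]; push_cast; ring
  have E5 : ((b+1).factorial : ℝ) = (b+1)*b.factorial := by
    rw [Nat.factorial_succ]; push_cast; ring
  have P1 : (2:ℝ)^(b+1) = 2*2^b := by rw [pow_succ]; ring
  have P2 : (2:ℝ)^(b+2) = 2*(2*2^b) := by rw [pow_succ, pow_succ]; ring
  rw [E1, E2, E3, E4, E5, P1, P2]
  have h1 := fact_ne b
  have h2 := fact_ne (2*b+1)
  have h3 : ((2:ℝ)) ^ b ≠ 0 := by positivity
  simp only [show ((2:ℕ)-1) = 1 from rfl, show ((1:ℕ)-1) = 0 from rfl,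
    Nat.factorial_one, Nat.factorial_zero, Nat.cast_one]
  field_simp
  ring

/-- The key factorial identity for the self-similarity (rows strictly below diagonal). -/
lemma stepA (a e : ℕ) :
    revC (a+e+4) (a+3) - revC (a+e+4) 1 / revC (a+e+3) 1 * revC (a+e+3) (a+3)
      = revC (a+e+2) (a+1) := by
  rw [revC_eq (a+e+4) (a+3) (by omega), revC_eq (a+e+4) 1 (by omega),
      revC_eq (a+e+3) 1 (by omega), revC_eq (a+e+3) (a+3) (by omega),
      revC_eq (a+e+2) (a+1) (by omega)]
  rw [show 2*(a+e+4) - (a+3) - 1 = a+2*e+4 by omega, show (a+e+4) - (a+3) = e+1 by omega,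
      show (a+3) - 1 = a+2 by omega,
      show 2*(a+e+4) - 1 - 1 = 2*a+2*e+6 by omega, show (a+e+4) - 1 = a+e+3 by omega,
      show 2*(a+e+3) - 1 - 1 = 2*a+2*e+4 by omega, show (a+e+3) - 1 = a+e+2 by omega,
      show 2*(a+e+3) - (a+3) - 1 = a+2*e+2 by omega, show (a+e+3) - (a+3) = e by omega,
      show 2*(a+e+2) - (a+1) - 1 = a+2*e+2 by omega, show (a+e+2) - (a+1) = e+1 by omega,
      show (a+1) - 1 = a by omega]
  have E1 : ((a+2*e+4).factorial : ℝ) = (a+2*e+4)*((a+2*e+3)*(a+2*e+2).factorial) := by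
    rw [show a+2*e+4 = (a+2*e+2)+1+1 by ring, Nat.factorial_succ, Nat.factorial_succ]
    push_cast; ring
  have E2 : ((2*a+2*e+6).factorial : ℝ) = (2*a+2*e+6)*((2*a+2*e+5)*(2*a+2*e+4).factorial) := by
    rw [show 2*a+2*e+6 = (2*a+2*e+4)+1+1 by ring, Nat.factorial_succ, Nat.factorial_succ]
    push_cast; ring
  have E3 : ((a+e+3).factorial : ℝ) = (a+e+3)*(a+e+2).factorial := by
    rw [show a+e+3 = (a+e+2)+1 by ring, Nat.factorial_succ]; push_cast; ring
  have E4 : ((a+2).factorial : ℝ) = (a+2)*((a+1)*a.factorial) := by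
    rw [show a+2 = a+1+1 by ring, Nat.factorial_succ, Nat.factorial_succ]; push_cast; ring
  have E5 : ((e+1).factorial : ℝ) = (e+1)*e.factorial := by
    rw [Nat.factorial_succ]; push_cast; ring
  have P1 : (2:ℝ)^(e+1) = 2*2^e := by rw [pow_succ]; ring
  have P2 : (2:ℝ)^(a+e+3) = 2*2^(a+e+2) := by
    rw [show a+e+3 = (a+e+2)+1 by ring, pow_succ]; ring
  rw [E1, E2, E3, E4, E5, P1, P2]
  have h1 := fact_ne a
  have h2 := fact_ne e
  have h3 := fact_ne (a+2*e+2)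
  have h4 := fact_ne (2*a+2*e+4)
  have h5 := fact_ne (a+e+2)
  have h6 : ((2:ℝ)) ^ e ≠ 0 := by positivity
  have h7 : ((2:ℝ)) ^ (a+e+2) ≠ 0 := by positivity
  simp only [show ((1:ℕ)-1) = 0 from rfl, Nat.factorial_zero, Nat.cast_one]
  field_simp
  ring

theorem revBessel_NE_self_similarity (n i j : ℕ) (hj : 3 ≤ j) (hji : j ≤ i) (hin : i ≤ n) :
    revNE 2 i j = revC (i - 2) (j - 2) := by
  rcases eq_or_lt_of_le hji with rfl | hlt
  · rw [show (2:ℕ) = 1 + 1 from rfl, revNE, if_neg (by simp [lt_irrefl]), revNE,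
        if_neg (by simp [lt_irrefl]), revNE, revC_diag, revC_diag]
  · obtain ⟨a, rfl⟩ : ∃ a, j = a + 3 := ⟨j - 3, by omega⟩
    obtain ⟨e, rfl⟩ : ∃ e, i = a + e + 4 := ⟨i - a - 4, by omega⟩
    have hNE1 : ∀ m jj, revNE 1 m jj = if 1 ≤ jj ∧ jj < m ∧ revC (m-1) 1 ≠ 0 then
        revC m jj - revC m 1 / revC (m-1) 1 * revC (m-1) jj else revC m jj := by
      intro m jj
      rw [show (1:ℕ) = 0 + 1 from rfl, revNE]
      simp only [revNE]
      rfl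
    have hpiv : revNE 1 (a + e + 4 - 1) 2 = 0 := by
      rw [show a + e + 4 - 1 = (a+e) + 3 by omega, hNE1,
          if_pos ⟨by omega, by omega, (revC_pos _ _ (by omega)).ne'⟩,
          show (a+e) + 3 - 1 = (a+e) + 2 by omega]
      exact colB (a+e)
    rw [show (2:ℕ) = 1 + 1 from rfl, revNE,
        if_neg (by push_neg; intro _ _; simpa using hpiv), hNE1,
        if_pos ⟨by omega, by omega, (revC_pos _ _ (by omega)).ne'⟩,
        show a + e + 4 - 1 = a + e + 3 by omega,
        show a + e + 4 - 2 = a + e + 2 by omega,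
        show a + 3 - 2 = a + 1 by omega]
    exact stepA a e
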